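/- Ham-sandwich for finite planar point sets: for any two finite sets A, B ⊆ ℝ², there exists a line ℓ such that each open halfplane bounded by ℓ contains at most |A|/2 points of A and at most |B|/2 points of B. -/

import Mathlib

open Finset

namespace HamS

variable {α : Type*}

noncomputable def fsup (f : α → ℝ) (T : Finset α) : ℝ :=
  if h : T.Nonempty then T.sup' h f else 0

noncomputable def finf (f : α → ℝ) (T : Finset α) : ℝ :=
  if h : T.Nonempty then T.inf' h f else 0

def sets (A : Finset α) (k : ℕ) : Finset (Finset α) :=
  A.powerset.filter (fun T => T.card = k)

lemma mem_sets {A : Finset α} {k : ℕ} {T : Finset α} :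
    T ∈ sets A k ↔ T ⊆ A ∧ T.card = k := by
  simp [sets]

lemma sets_nonempty {A : Finset α} {k : ℕ} (hk : k ≤ A.card) : (sets A k).Nonempty := by
  obtain ⟨T, hT, hc⟩ := Finset.exists_subset_card_eq hk
  exact ⟨T, mem_sets.2 ⟨hT, hc⟩⟩

noncomputable def kth (A : Finset α) (k : ℕ) (f : α → ℝ) : ℝ :=
  if h : (sets A k).Nonempty then (sets A k).inf' h (fsup f) else 0

noncomputable def kmax (A : Finset α) (k : ℕ) (f : α → ℝ) : ℝ :=
  if h : (sets A k).Nonempty then (sets A k).sup' h (finf f) else 0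

lemma count_lt_kth (A : Finset α) {k : ℕ} (hk1 : 1 ≤ k) (f : α → ℝ) :
    (A.filter (fun p => f p < kth A k f)).card < k := by
  classical
  by_contra hcon
  push_neg at hcon
  obtain ⟨T, hTsub, hTcard⟩ := Finset.exists_subset_card_eq hcon
  have hTA : T ⊆ A := hTsub.trans (filter_subset _ _)
  have hmem : T ∈ sets A k := mem_sets.2 ⟨hTA, hTcard⟩
  have hne : (sets A k).Nonempty := ⟨T, hmem⟩
  have hTne : T.Nonempty := card_pos.1 (hTcard ▸ hk1)
  have h1 : kth A k f ≤ fsup f T := by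
    rw [kth, dif_pos hne]; exact inf'_le _ hmem
  have h2 : fsup f T < kth A k f := by
    rw [fsup, dif_pos hTne]
    exact (sup'_lt_iff hTne).2 fun p hp => (mem_filter.1 (hTsub hp)).2
  exact absurd (h1.trans_lt h2) (lt_irrefl _)

lemma le_count_le_kth (A : Finset α) {k : ℕ} (hk1 : 1 ≤ k) (hk2 : k ≤ A.card) (f : α → ℝ) :
    k ≤ (A.filter (fun p => f p ≤ kth A k f)).card := by
  classical
  have hne := sets_nonempty hk2
  obtain ⟨T, hmem, hEq⟩ := Finset.exists_mem_eq_inf' hne (fsup f)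
  obtain ⟨hTA, hTcard⟩ := mem_sets.1 hmem
  have hTne : T.Nonempty := card_pos.1 (hTcard ▸ hk1)
  have h : kth A k f = T.sup' hTne f := by
    rw [kth, dif_pos hne, hEq, fsup, dif_pos hTne]
  calc k = T.card := hTcard.symm
    _ ≤ _ := card_le_card fun p hp => mem_filter.2 ⟨hTA hp, by rw [h]; exact le_sup' f hp⟩

lemma kth_mono (A : Finset α) {k k' : ℕ} (hk1 : 1 ≤ k) (hkk : k ≤ k') (hk2 : k' ≤ A.card)
    (f : α → ℝ) : kth A k f ≤ kth A k' f := by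
  have hne' := sets_nonempty hk2
  have hne := sets_nonempty (le_trans hkk hk2)
  rw [kth, dif_pos hne, kth, dif_pos hne']
  refine le_inf' _ _ fun T' hT' => ?_
  obtain ⟨hT'A, hT'card⟩ := mem_sets.1 hT'
  obtain ⟨T, hTsub, hTcard⟩ := Finset.exists_subset_card_eq (hT'card ▸ hkk : k ≤ T'.card)
  have hTne : T.Nonempty := card_pos.1 (hTcard ▸ hk1)
  have hT'ne : T'.Nonempty := hTne.mono hTsub
  refine le_trans (inf'_le _ (mem_sets.2 ⟨hTsub.trans hT'A, hTcard⟩)) ?_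
  rw [fsup, dif_pos hTne, fsup, dif_pos hT'ne]
  exact sup'_le _ _ fun p hp => le_sup' f (hTsub hp)

lemma fsup_neg (f : α → ℝ) (T : Finset α) : fsup (fun p => -f p) T = - finf f T := by
  rcases T.eq_empty_or_nonempty with h | h
  · subst h; simp [fsup, finf]
  rw [fsup, dif_pos h, finf, dif_pos h]
  apply le_antisymm
  · exact sup'_le _ _ fun p hp => neg_le_neg (inf'_le f hp)
  · rw [neg_le]
    refine le_inf' _ _ fun p hp => ?_
    rw [neg_le]
    exact le_sup' (fun p => -f p) hp

lemma kth_neg (A : Finset α) (k : ℕ) (f : α → ℝ) :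
    kth A k (fun p => -f p) = - kmax A k f := by
  rcases (sets A k).eq_empty_or_nonempty with h | h
  · rw [kth, kmax, dif_neg (by simp [h]), dif_neg (by simp [h])]; simp
  rw [kth, dif_pos h, kmax, dif_pos h]
  rw [show (fsup fun p => -f p) = fun T => - finf f T from funext (fsup_neg f)]
  apply le_antisymm
  · rw [le_neg]
    refine sup'_le _ _ fun T hT => ?_
    rw [le_neg]
    exact inf'_le _ hT
  · exact le_inf' _ _ fun T hT => neg_le_neg (le_sup' _ hT)

lemma kmax_eq_kth (A : Finset α) {k : ℕ} (hk1 : 1 ≤ k) (hk2 : k ≤ A.card) (f : α → ℝ) :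
    kmax A k f = kth A (A.card + 1 - k) f := by
  classical
  set n := A.card with hn
  set k' := n + 1 - k with hk'
  have hk'1 : 1 ≤ k' := by omega
  have hk'2 : k' ≤ n := by omega
  have hne := sets_nonempty (hn ▸ hk2)
  have hne' := sets_nonempty (hn ▸ hk'2)
  apply le_antisymm
  · rw [kmax, dif_pos hne, kth, dif_pos hne']
    refine sup'_le _ _ fun T hT => le_inf' _ _ fun T' hT' => ?_
    obtain ⟨hTA, hTc⟩ := mem_sets.1 hT
    obtain ⟨hT'A, hT'c⟩ := mem_sets.1 hT'
    have hint : (T ∩ T').Nonempty := by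
      rw [← card_pos]
      have hu : (T ∪ T') ⊆ A := union_subset hTA hT'A
      have := Finset.card_union_add_card_inter T T'
      have := card_le_card hu
      omega
    obtain ⟨q, hq⟩ := hint
    have hqT : q ∈ T := (mem_inter.1 hq).1
    have hqT' : q ∈ T' := (mem_inter.1 hq).2
    have hTne : T.Nonempty := ⟨q, hqT⟩
    have hT'ne : T'.Nonempty := ⟨q, hqT'⟩
    rw [finf, dif_pos hTne, fsup, dif_pos hT'ne]
    exact le_trans (inf'_le f hqT) (le_sup' f hqT')
  · -- kth A k' f ≤ kmax A k f
    set t := kth A k' f with ht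
    have hlt : (A.filter (fun p => f p < t)).card < k' := count_lt_kth A hk'1 f
    have hsplit := Finset.card_filter_add_card_filter_not
      (s := A) (p := fun p => f p < t)
    have hU : k ≤ (A.filter (fun p => ¬ f p < t)).card := by omega
    obtain ⟨T, hTsub, hTc⟩ := Finset.exists_subset_card_eq hU
    have hTA : T ⊆ A := hTsub.trans (filter_subset _ _)
    have hTmem : T ∈ sets A k := mem_sets.2 ⟨hTA, hTc⟩
    have hTne : T.Nonempty := card_pos.1 (hTc ▸ hk1)
    have h1 : t ≤ finf f T := by
      rw [finf, dif_pos hTne]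
      refine le_inf' _ _ fun p hp => ?_
      have := (mem_filter.1 (hTsub hp)).2
      exact not_lt.1 this
    rw [kmax, dif_pos hne]
    exact h1.trans (le_sup' _ hTmem)

noncomputable def med (A : Finset α) (f : α → ℝ) : ℝ :=
  (kth A ((A.card + 1) / 2) f + kth A (A.card + 1 - (A.card + 1) / 2) f) / 2

lemma med_neg (A : Finset α) (f : α → ℝ) : med A (fun p => -f p) = - med A f := by
  rcases Nat.eq_zero_or_pos A.card with h0 | hpos
  · have hA : A = ∅ := card_eq_zero.1 h0
    subst hA
    have h1 : ∀ g : α → ℝ, kth (∅ : Finset α) 0 g = 0 := by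
      intro g
      have hne : (sets (∅ : Finset α) 0).Nonempty := sets_nonempty (by simp)
      have : sets (∅ : Finset α) 0 = {∅} := by
        ext T; simp [mem_sets, Finset.subset_empty, Finset.card_eq_zero]
      rw [kth, dif_pos hne]
      simp only [this, inf'_singleton, fsup]
      rw [dif_neg (by simp)]
    have h2 : ∀ g : α → ℝ, kth (∅ : Finset α) 1 g = 0 := by
      intro g
      have : sets (∅ : Finset α) 1 = ∅ := by
        ext T; simp [mem_sets, Finset.subset_empty]; rintro rfl; simp
      rw [kth, dif_neg (by simp [this])]
    simp [med, h1, h2]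
  · set n := A.card with hn
    set k := (n + 1) / 2 with hk
    have hk1 : 1 ≤ k := by omega
    have hk2 : k ≤ n := by omega
    set k' := n + 1 - k with hk'
    have hk'1 : 1 ≤ k' := by omega
    have hk'2 : k' ≤ n := by omega
    have e1 : kth A k (fun p => -f p) = - kth A k' f := by
      rw [kth_neg, kmax_eq_kth A hk1 (hn ▸ hk2)]
    have e2 : kth A k' (fun p => -f p) = - kth A k f := by
      have h3 : A.card + 1 - k' = k := by omega
      rw [kth_neg, kmax_eq_kth A hk'1 (hn ▸ hk'2), h3]
    simp only [med, ← hn, ← hk, ← hk', e1, e2]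
    ring

lemma med_count_lt (A : Finset α) (f : α → ℝ) :
    ((A.filter fun p => f p < med A f).card : ℝ) ≤ (A.card : ℝ) / 2 := by
  classical
  rcases Nat.eq_zero_or_pos A.card with h0 | hpos
  · have hA : A = ∅ := card_eq_zero.1 h0
    subst hA; simp
  set n := A.card with hn
  set k := (n + 1) / 2 with hk
  have hk1 : 1 ≤ k := by omega
  have hk2 : k ≤ n := by omega
  set k' := n + 1 - k with hk'
  have hk'1 : 1 ≤ k' := by omega
  have hk'2 : k' ≤ n := by omega
  have hmono : kth A k f ≤ kth A k' f := kth_mono A hk1 (by omega) (hn ▸ hk'2) f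
  have hmed : med A f ≤ kth A k' f := by
    simp only [med, ← hn, ← hk, ← hk']
    linarith
  have hsub : (A.filter fun p => f p < med A f) ⊆ (A.filter fun p => f p < kth A k' f) :=
    monotone_filter_right _ fun p _ h => h.trans_le hmed
  have h1 : (A.filter fun p => f p < med A f).card < k' :=
    lt_of_le_of_lt (card_le_card hsub) (count_lt_kth A hk'1 f)
  have h2 : 2 * (A.filter fun p => f p < med A f).card ≤ n := by omega
  have h3 : (2 : ℝ) * ((A.filter fun p => f p < med A f).card : ℝ) ≤ (n : ℝ) := by
    exact_mod_cast h2
  rw [hn]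
  linarith

lemma med_count_gt (A : Finset α) (f : α → ℝ) :
    ((A.filter fun p => med A f < f p).card : ℝ) ≤ (A.card : ℝ) / 2 := by
  classical
  rcases Nat.eq_zero_or_pos A.card with h0 | hpos
  · have hA : A = ∅ := card_eq_zero.1 h0
    subst hA; simp
  set n := A.card with hn
  set k := (n + 1) / 2 with hk
  have hk1 : 1 ≤ k := by omega
  have hk2 : k ≤ n := by omega
  set k' := n + 1 - k with hk'
  have hk'1 : 1 ≤ k' := by omega
  have hk'2 : k' ≤ n := by omega
  have hmono : kth A k f ≤ kth A k' f := kth_mono A hk1 (by omega) (hn ▸ hk'2) f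
  have hmed : kth A k f ≤ med A f := by
    simp only [med, ← hn, ← hk, ← hk']
    linarith
  have hsub : (A.filter fun p => med A f < f p) ⊆ (A.filter fun p => ¬ f p ≤ kth A k f) :=
    monotone_filter_right _ fun p _ h h' => absurd ((h'.trans hmed).trans_lt h) (lt_irrefl _)
  have hle := le_count_le_kth A hk1 (hn ▸ hk2) f
  have hsplit := Finset.card_filter_add_card_filter_not
    (s := A) (p := fun p => f p ≤ kth A k f)
  have h1 : (A.filter fun p => med A f < f p).card ≤ n - k := by
    have := card_le_card hsub
    omega
  have h2 : 2 * (A.filter fun p => med A f < f p).card ≤ n := by omega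
  have h3 : (2 : ℝ) * ((A.filter fun p => med A f < f p).card : ℝ) ≤ (n : ℝ) := by
    exact_mod_cast h2
  rw [hn]
  linarith

lemma fsup_continuous (A T : Finset α) (F : ℝ → α → ℝ)
    (hF : ∀ p, Continuous fun θ => F θ p) :
    Continuous fun θ => fsup (F θ) T := by
  rcases T.eq_empty_or_nonempty with h | h
  · subst h; simp only [fsup]
    rw [show (fun θ => if h : (∅ : Finset α).Nonempty then (∅ : Finset α).sup' h (F θ) else 0)
      = fun _ => (0:ℝ) from funext fun θ => dif_neg (by simp)]
    exact continuous_const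
  · simp only [fsup, dif_pos h]
    exact Continuous.finset_sup'_apply h fun p _ => hF p

lemma kth_continuous (A : Finset α) (k : ℕ) (F : ℝ → α → ℝ)
    (hF : ∀ p, Continuous fun θ => F θ p) :
    Continuous fun θ => kth A k (F θ) := by
  rcases (sets A k).eq_empty_or_nonempty with h | h
  · simp only [kth]
    rw [show (fun θ => if hh : (sets A k).Nonempty then (sets A k).inf' hh (fsup (F θ)) else 0)
      = fun _ => (0:ℝ) from funext fun θ => dif_neg (by simp [h])]
    exact continuous_const
  · simp only [kth, dif_pos h]
    exact Continuous.finset_inf'_apply h fun T _ => fsup_continuous A T F hF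

lemma med_continuous (A : Finset α) (F : ℝ → α → ℝ)
    (hF : ∀ p, Continuous fun θ => F θ p) :
    Continuous fun θ => med A (F θ) := by
  simp only [med]
  exact ((kth_continuous A _ F hF).add (kth_continuous A _ F hF)).div_const 2

noncomputable def proj (θ : ℝ) (p : ℝ × ℝ) : ℝ := Real.cos θ * p.1 + Real.sin θ * p.2

lemma proj_continuous (p : ℝ × ℝ) : Continuous fun θ => proj θ p := by
  unfold proj
  fun_prop

end HamS

open HamS

theorem stmt_15 (A B : Finset (ℝ × ℝ)) :
    ∃ a : ℝ × ℝ, a ≠ 0 ∧ ∃ b : ℝ,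
      ((A.filter (fun p => a.1 * p.1 + a.2 * p.2 < b)).card : ℝ) ≤ (A.card : ℝ) / 2 ∧
      ((A.filter (fun p => b < a.1 * p.1 + a.2 * p.2)).card : ℝ) ≤ (A.card : ℝ) / 2 ∧
      ((B.filter (fun p => a.1 * p.1 + a.2 * p.2 < b)).card : ℝ) ≤ (B.card : ℝ) / 2 ∧
      ((B.filter (fun p => b < a.1 * p.1 + a.2 * p.2)).card : ℝ) ≤ (B.card : ℝ) / 2 := by
  classical
  set g : ℝ → ℝ := fun θ => med A (proj θ) - med B (proj θ) with hg
  have hcont : Continuous g :=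
    (med_continuous A proj proj_continuous).sub (med_continuous B proj proj_continuous)
  have hproj_pi : proj Real.pi = fun p => - proj 0 p := by
    funext p
    simp [proj, Real.cos_pi, Real.sin_pi, Real.cos_zero, Real.sin_zero]
  have hgpi : g Real.pi = - g 0 := by
    simp only [hg, hproj_pi, med_neg]
    ring
  obtain ⟨θ, hθ⟩ : ∃ θ, g θ = 0 := by
    rcases le_total (g 0) 0 with h | h
    · have hm : (0:ℝ) ∈ Set.Icc (g 0) (g Real.pi) := ⟨h, by rw [hgpi]; linarith⟩
      obtain ⟨θ, _, hθ⟩ := intermediate_value_Icc (le_of_lt Real.pi_pos)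
        hcont.continuousOn hm
      exact ⟨θ, hθ⟩
    · have hm : (0:ℝ) ∈ Set.Icc (g Real.pi) (g 0) := ⟨by rw [hgpi]; linarith, h⟩
      obtain ⟨θ, _, hθ⟩ := intermediate_value_Icc' (le_of_lt Real.pi_pos)
        hcont.continuousOn hm
      exact ⟨θ, hθ⟩
  have hmedB : med B (proj θ) = med A (proj θ) := by
    have := sub_eq_zero.1 hθ
    linarith [this]
  refine ⟨(Real.cos θ, Real.sin θ), ?_, med A (proj θ), ?_, ?_, ?_, ?_⟩
  · intro hzero
    have h1 : Real.cos θ = 0 := congrArg Prod.fst hzero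
    have h2 : Real.sin θ = 0 := congrArg Prod.snd hzero
    have := Real.sin_sq_add_cos_sq θ
    rw [h1, h2] at this
    norm_num at this
  · exact med_count_lt A (proj θ)
  · exact med_count_gt A (proj θ)
  · rw [← hmedB]; exact med_count_lt B (proj θ)
  · rw [← hmedB]; exact med_count_gt B (proj θ)
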